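/- (Theorem 2, from Lemma 3) Under the hypotheses of Lemma 3 (C nonempty compact, h ∈ C¹, L_f h > 0 on ∂C = {h = 0}), the function B = 1/h: Int(C) → ℝ satisfies L_f B(x) ≤ γ₁ h(x) = γ₁ / B(x) on Int(C) for some γ₁ > 0, and h satisfies L_f h(x) ≥ −γ₂ h(x) on Int(C) for some γ₂ > 0. -/

import Mathlib

/-- Lemma 3 core: compactness argument giving `g x ≥ -γ (h x)^k` on `{h > 0}`. -/
lemma aux_lemma3 {n : ℕ} (g h : (Fin n → ℝ) → ℝ) (hg : Continuous g) (hhc : Continuous h)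
    (hcomp : IsCompact {x | 0 ≤ h x}) (hbdry : ∀ x, h x = 0 → 0 < g x) (k : ℕ) :
    ∃ γ : ℝ, 0 < γ ∧ ∀ x, 0 < h x → g x ≥ -γ * (h x) ^ k := by
  set K : Set (Fin n → ℝ) := {x | 0 ≤ h x ∧ g x ≤ 0} with hKdef
  have hKclosed : IsClosed K := by
    have hKeq : K = h ⁻¹' (Set.Ici 0) ∩ g ⁻¹' (Set.Iic 0) := by
      ext x; simp [hKdef, Set.mem_setOf_eq]
    rw [hKeq]
    exact (isClosed_Ici.preimage hhc).inter (isClosed_Iic.preimage hg)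
  have hKcomp : IsCompact K := hcomp.of_isClosed_subset hKclosed (fun x hx => hx.1)
  by_cases hK : K.Nonempty
  · obtain ⟨a, ha, hamin⟩ := hKcomp.exists_isMinOn hK hhc.continuousOn
    obtain ⟨b, hb, hbmin⟩ := hKcomp.exists_isMinOn hK hg.continuousOn
    have hha : 0 < h a := by
      rcases lt_or_eq_of_le ha.1 with h1 | h1
      · exact h1
      · exact absurd ha.2 (not_le.mpr (hbdry a h1.symm))
    refine ⟨max ((-g b) / (h a) ^ k) 1, lt_of_lt_of_le one_pos (le_max_right _ _), ?_⟩
    intro x hx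
    set γ := max ((-g b) / (h a) ^ k) 1 with hγdef
    have hγ1 : (1:ℝ) ≤ γ := le_max_right _ _
    by_cases hgx : 0 ≤ g x
    · have : -γ * (h x) ^ k ≤ 0 := by
        have : 0 < (h x) ^ k := pow_pos hx k
        nlinarith
      linarith
    · have hxK : x ∈ K := ⟨le_of_lt hx, le_of_lt (not_le.mp hgx)⟩
      have h1 : h a ≤ h x := hamin hxK
      have h2 : g b ≤ g x := hbmin hxK
      have hpak : 0 < (h a) ^ k := pow_pos hha k
      have hpow : (h a) ^ k ≤ (h x) ^ k := pow_le_pow_left₀ (le_of_lt hha) h1 k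
      have hγgb : -g b ≤ γ * (h a) ^ k := by
        have := le_max_left ((-g b) / (h a) ^ k) 1
        rw [div_le_iff₀ hpak] at this
        linarith [this]
      have hγpos : (0:ℝ) < γ := lt_of_lt_of_le one_pos hγ1
      have : γ * (h a) ^ k ≤ γ * (h x) ^ k := by nlinarith
      linarith
  · refine ⟨1, one_pos, fun x hx => ?_⟩
    have hgx : 0 < g x := by
      by_contra hc
      exact hK ⟨x, le_of_lt hx, not_lt.mp hc⟩
    have : 0 < (h x) ^ k := pow_pos hx k
    nlinarith

/-- Theorem 2: under the hypotheses of Lemma 3, B = 1/h satisfies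
L_f B ≤ γ₁ h = γ₁/B on Int(C), and h satisfies L_f h ≥ −γ₂ h on Int(C). -/
theorem stmt14 (n : ℕ) (f : (Fin n → ℝ) → (Fin n → ℝ)) (hf : LocallyLipschitz f)
    (h : (Fin n → ℝ) → ℝ) (hh : ContDiff ℝ 1 h)
    (hne : {x | 0 ≤ h x}.Nonempty) (hcomp : IsCompact {x | 0 ≤ h x})
    (hcl : {x | 0 ≤ h x} = closure {x | 0 < h x})
    (hbdry : ∀ x, h x = 0 → 0 < fderiv ℝ h x (f x)) :
    (∃ γ₁ : ℝ, 0 < γ₁ ∧ ∀ x, 0 < h x →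
      fderiv ℝ (fun y => (h y)⁻¹) x (f x) ≤ γ₁ * h x) ∧
    (∃ γ₂ : ℝ, 0 < γ₂ ∧ ∀ x, 0 < h x →
      fderiv ℝ h x (f x) ≥ -γ₂ * h x) := by
  have hhc : Continuous h := hh.continuous
  have hgc : Continuous (fun x => fderiv ℝ h x (f x)) := by
    exact (hh.continuous_fderiv one_ne_zero).clm_apply hf.continuous
  constructor
  · obtain ⟨γ₁, hγ₁, hγ⟩ := aux_lemma3 (fun x => fderiv ℝ h x (f x)) h hgc hhc hcomp hbdry 3
    refine ⟨γ₁, hγ₁, fun x hx => ?_⟩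
    have hdiff : HasFDerivAt h (fderiv ℝ h x) x :=
      (hh.differentiable one_ne_zero x).hasFDerivAt
    have hne' : h x ≠ 0 := ne_of_gt hx
    have hinv : HasFDerivAt (fun y => (h y)⁻¹)
        ((ContinuousLinearMap.smulRight (1 : ℝ →L[ℝ] ℝ) (-(h x ^ 2)⁻¹)).comp
          (fderiv ℝ h x)) x :=
      (hasFDerivAt_inv hne').comp x hdiff
    rw [hinv.fderiv]
    simp only [ContinuousLinearMap.comp_apply, ContinuousLinearMap.smulRight_apply,
      ContinuousLinearMap.one_apply, smul_eq_mul]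
    have hg3 := hγ x hx
    have hp2 : 0 < h x ^ 2 := by positivity
    set u := fderiv ℝ h x (f x) with hu
    have key : -u * (h x ^ 2)⁻¹ ≤ (γ₁ * (h x) ^ 3) * (h x ^ 2)⁻¹ :=
      mul_le_mul_of_nonneg_right (by linarith) (inv_nonneg.mpr hp2.le)
    have e : (γ₁ * (h x) ^ 3) * (h x ^ 2)⁻¹ = γ₁ * h x := by
      field_simp
    have e2 : u * -(h x ^ 2)⁻¹ = -u * (h x ^ 2)⁻¹ := by ring
    rw [e] at key
    rw [e2]
    exact key
  · obtain ⟨γ₂, hγ₂, hγ⟩ := aux_lemma3 (fun x => fderiv ℝ h x (f x)) h hgc hhc hcomp hbdry 1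
    exact ⟨γ₂, hγ₂, fun x hx => by simpa using hγ x hx⟩
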